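/- Let ε ∈ (0, 3/4), λ > 0, μ > 0, δ > 0. Let f : ℝ^{d×r} → ℝ be differentiable with ‖∇f(u) − ∇f(v)‖_F ≤ L̂‖u − v‖_F for all u, v and ‖∇f(u)‖_F ≤ L̂ for all u ∈ St(d,r)^ε. Let S ⊆ St(d,r) be a set of local minimizers of f on St(d,r) with common value f*_S, and assume the local Riemannian PŁ condition: |f(z) − f*_S| ≤ (1/(2μ))‖grad f(z)‖_F² for all z ∈ St(d,r) with dist(S, z) ≤ 2δ. Assume further the descent inequality 𝓛(x) ≤ 𝓛(x') + ⟨∇𝓛(x'), x − x'⟩ + (L'/2)‖x − x'‖_F² holds whenever x ∈ St(d,r)^ε and x' = Proj_St(x), for some L' > 0. Then for every x ∈ St(d,r)^ε with dist(S, x) ≤ δ: 𝓛(x) − f*_S ≤ (1/μ')‖Λ(x)‖_F², where 1/μ' = max{ 1/μ, (2(3+2ε)²L̂² + μL') / (2μλ²(1−ε)²) }. -/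

import Mathlib

open Matrix BigOperators Finset

noncomputable section

namespace DRFGT

/-- Frobenius inner product `⟨A, B⟩ = Tr (A Bᵀ)`. -/
def finner {m k : Type*} [Fintype m] [Fintype k] (A B : Matrix m k ℝ) : ℝ :=
  Matrix.trace (A * Bᵀ)

/-- Frobenius norm `‖A‖_F = √⟨A, A⟩`. -/
def fnorm {m k : Type*} [Fintype m] [Fintype k] (A : Matrix m k ℝ) : ℝ :=
  Real.sqrt (finner A A)

/-- Skew part of a square matrix, `skew(A) = (A − Aᵀ)/2`. -/
def mskew {m : Type*} [Fintype m] (A : Matrix m m ℝ) : Matrix m m ℝ :=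
  (2 : ℝ)⁻¹ • (A - Aᵀ)

/-- Symmetric part of a square matrix, `sym(A) = (A + Aᵀ)/2`. -/
def msym {m : Type*} [Fintype m] (A : Matrix m m ℝ) : Matrix m m ℝ :=
  (2 : ℝ)⁻¹ • (A + Aᵀ)

/-- Relative (Riemannian) gradient `grad f(x) = skew(∇f(x) xᵀ) x`, where `Df` denotes the
Euclidean gradient `∇f` of `f`. -/
def rgrad {d r : ℕ} (Df : Matrix (Fin d) (Fin r) ℝ → Matrix (Fin d) (Fin r) ℝ)
    (x : Matrix (Fin d) (Fin r) ℝ) : Matrix (Fin d) (Fin r) ℝ :=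
  mskew (Df x * xᵀ) * x

/-- Landing field `Λ(x) = grad f(x) + λ x (xᵀ x − I_r)`. -/
def landing {d r : ℕ} (Df : Matrix (Fin d) (Fin r) ℝ → Matrix (Fin d) (Fin r) ℝ) (lam : ℝ)
    (x : Matrix (Fin d) (Fin r) ℝ) : Matrix (Fin d) (Fin r) ℝ :=
  rgrad Df x + lam • (x * (xᵀ * x - 1))

/-- The Stiefel manifold `St(d,r) = {x : xᵀ x = I_r}`. -/
def St (d r : ℕ) : Set (Matrix (Fin d) (Fin r) ℝ) := {x | xᵀ * x = 1}

/-- The safety region `St(d,r)^ε = {x : ‖xᵀ x − I_r‖_F ≤ ε}`. -/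
def StEps (d r : ℕ) (ε : ℝ) : Set (Matrix (Fin d) (Fin r) ℝ) :=
  {x | fnorm (xᵀ * x - 1) ≤ ε}

/-- The merit function `𝓛(x) = f(x) − ½⟨sym(xᵀ∇f(x)), xᵀx − I_r⟩ + γ·¼‖xᵀx − I_r‖_F²`. -/
def merit {d r : ℕ} (f : Matrix (Fin d) (Fin r) ℝ → ℝ)
    (Df : Matrix (Fin d) (Fin r) ℝ → Matrix (Fin d) (Fin r) ℝ) (γ : ℝ)
    (x : Matrix (Fin d) (Fin r) ℝ) : ℝ :=
  f x - (2 : ℝ)⁻¹ * finner (msym (xᵀ * Df x)) (xᵀ * x - 1)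
    + γ * (4 : ℝ)⁻¹ * fnorm (xᵀ * x - 1) ^ 2

/-- The gradient of the merit function at on-manifold points:
`∇𝓛(x) = ∇f(x) − x · sym(xᵀ∇f(x))` for `x ∈ St(d,r)`. -/
def meritGradSt {d r : ℕ} (Df : Matrix (Fin d) (Fin r) ℝ → Matrix (Fin d) (Fin r) ℝ)
    (x : Matrix (Fin d) (Fin r) ℝ) : Matrix (Fin d) (Fin r) ℝ :=
  Df x - x * msym (xᵀ * Df x)

/-- `x'` is the polar factor of a full-column-rank `x`, i.e. the projection `Proj_St(x)` of `x`
onto the Stiefel manifold: if `x = U S Vᵀ` is a thin SVD then `x' = U Vᵀ`, equivalently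
`x'ᵀ x' = I_r` and `x = x' P` for a positive definite `P` (namely `P = V S Vᵀ`). -/
def IsPolarFactor {d r : ℕ} (x x' : Matrix (Fin d) (Fin r) ℝ) : Prop :=
  x'ᵀ * x' = 1 ∧ ∃ P : Matrix (Fin r) (Fin r) ℝ, P.PosDef ∧ x = x' * P

/-- Frobenius distance from `x` to a set `S`: `dist(S,x) = inf_{y ∈ S} ‖x − y‖_F`. -/
def fdist {d r : ℕ} (S : Set (Matrix (Fin d) (Fin r) ℝ)) (x : Matrix (Fin d) (Fin r) ℝ) : ℝ :=
  sInf ((fun y => fnorm (x - y)) '' S)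

/-- Network average `z̄ = (1/n) Σᵢ zᵢ`. -/
def avg {n d r : ℕ} (z : Fin n → Matrix (Fin d) (Fin r) ℝ) : Matrix (Fin d) (Fin r) ℝ :=
  (n : ℝ)⁻¹ • ∑ i, z i

/-- Frobenius norm of a stacked family: `‖𝐳‖_F = (Σᵢ ‖zᵢ‖_F²)^{1/2}`. -/
def snorm {n d r : ℕ} (z : Fin n → Matrix (Fin d) (Fin r) ℝ) : ℝ :=
  Real.sqrt (∑ i, fnorm (z i) ^ 2)


variable {m k n : Type*} [Fintype m] [Fintype k] [Fintype n]

lemma finner_eq_sum (A B : Matrix m k ℝ) : finner A B = ∑ i, ∑ j, A i j * B i j := by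
  simp [finner, Matrix.trace, Matrix.mul_apply, Matrix.diag, Matrix.transpose_apply]

lemma finner_eq_sum' (A B : Matrix m k ℝ) : finner A B = ∑ p : m × k, A p.1 p.2 * B p.1 p.2 := by
  rw [finner_eq_sum]; exact (Fintype.sum_prod_type (f := fun p => A p.1 p.2 * B p.1 p.2)).symm

lemma finner_self_nonneg (A : Matrix m k ℝ) : 0 ≤ finner A A := by
  rw [finner_eq_sum]
  exact Finset.sum_nonneg fun i _ => Finset.sum_nonneg fun j _ => mul_self_nonneg _

lemma fnorm_nonneg (A : Matrix m k ℝ) : 0 ≤ fnorm A := Real.sqrt_nonneg _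

lemma fnorm_sq (A : Matrix m k ℝ) : fnorm A ^ 2 = finner A A :=
  Real.sq_sqrt (finner_self_nonneg A)

lemma fnorm_sq_eq_sum' (A : Matrix m k ℝ) : fnorm A ^ 2 = ∑ p : m × k, A p.1 p.2 ^ 2 := by
  rw [fnorm_sq, finner_eq_sum']; simp [sq]

lemma fnorm_sq_eq_sum (A : Matrix m k ℝ) : fnorm A ^ 2 = ∑ i, ∑ j, A i j ^ 2 := by
  rw [fnorm_sq, finner_eq_sum]; simp [sq]

lemma sq_le_imp {a b : ℝ} (ha : 0 ≤ a) (hb : 0 ≤ b) (h : a ^ 2 ≤ b ^ 2) : a ≤ b := by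
  nlinarith

lemma finner_le (A B : Matrix m k ℝ) : finner A B ≤ fnorm A * fnorm B := by
  have h := Finset.sum_mul_sq_le_sq_mul_sq Finset.univ (fun p : m × k => A p.1 p.2)
    (fun p : m × k => B p.1 p.2)
  have h1 : (finner A B) ^ 2 ≤ (fnorm A * fnorm B) ^ 2 := by
    rw [finner_eq_sum', mul_pow, fnorm_sq_eq_sum', fnorm_sq_eq_sum']
    exact h
  refine le_trans (le_abs_self _) (sq_le_imp (abs_nonneg _) (mul_nonneg (fnorm_nonneg A) (fnorm_nonneg B)) ?_)
  rwa [sq_abs]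


lemma finner_comm (A B : Matrix m k ℝ) : finner A B = finner B A := by
  simp [finner_eq_sum, mul_comm]

lemma finner_add_left (A B C : Matrix m k ℝ) : finner (A + B) C = finner A C + finner B C := by
  simp [finner_eq_sum, add_mul, Finset.sum_add_distrib]

lemma finner_add_right (A B C : Matrix m k ℝ) : finner A (B + C) = finner A B + finner A C := by
  simp [finner_eq_sum, mul_add, Finset.sum_add_distrib]

lemma finner_smul_right (c : ℝ) (A B : Matrix m k ℝ) : finner A (c • B) = c * finner A B := by
  simp [finner_eq_sum, Finset.mul_sum, Matrix.smul_apply]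
  ring_nf
  simp [mul_comm, mul_assoc, mul_left_comm]

lemma finner_zero_right (A : Matrix m k ℝ) : finner A 0 = 0 := by
  simp [finner]

lemma fnorm_zero : fnorm (0 : Matrix m k ℝ) = 0 := by
  simp [fnorm, finner]

lemma fnorm_sq_add (A B : Matrix m k ℝ) :
    fnorm (A + B) ^ 2 = fnorm A ^ 2 + 2 * finner A B + fnorm B ^ 2 := by
  simp only [fnorm_sq]
  rw [finner_add_left, finner_add_right, finner_add_right, finner_comm B A]
  ring

lemma fnorm_add_le (A B : Matrix m k ℝ) : fnorm (A + B) ≤ fnorm A + fnorm B := by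
  refine sq_le_imp (fnorm_nonneg _) (add_nonneg (fnorm_nonneg _) (fnorm_nonneg _)) ?_
  rw [fnorm_sq_add]
  have := finner_le A B
  nlinarith

lemma fnorm_neg (A : Matrix m k ℝ) : fnorm (-A) = fnorm A := by
  unfold fnorm
  congr 1
  simp [finner_eq_sum]

lemma fnorm_sub_rev (A B : Matrix m k ℝ) : fnorm (A - B) = fnorm (B - A) := by
  rw [← fnorm_neg (A - B), neg_sub]

lemma fnorm_sub_le (A B : Matrix m k ℝ) : fnorm (A - B) ≤ fnorm A + fnorm B := by
  have := fnorm_add_le A (-B)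
  rw [fnorm_neg] at this
  simpa [sub_eq_add_neg] using this

lemma fnorm_smul (c : ℝ) (A : Matrix m k ℝ) : fnorm (c • A) = |c| * fnorm A := by
  unfold fnorm
  have : finner (c • A) (c • A) = c ^ 2 * finner A A := by
    simp only [finner_eq_sum, Finset.mul_sum, Matrix.smul_apply, smul_eq_mul]
    refine Finset.sum_congr rfl fun i _ => Finset.sum_congr rfl fun j _ => by ring
  rw [this, Real.sqrt_mul (sq_nonneg c), Real.sqrt_sq_eq_abs]

lemma fnorm_transpose (A : Matrix m k ℝ) : fnorm Aᵀ = fnorm A := by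
  unfold fnorm
  congr 1
  simp only [finner, Matrix.transpose_transpose]
  rw [Matrix.trace_mul_comm]

lemma fnorm_mul_le (A : Matrix m k ℝ) (B : Matrix k n ℝ) :
    fnorm (A * B) ≤ fnorm A * fnorm B := by
  refine sq_le_imp (fnorm_nonneg _) (mul_nonneg (fnorm_nonneg _) (fnorm_nonneg _)) ?_
  rw [mul_pow, fnorm_sq_eq_sum, fnorm_sq_eq_sum, fnorm_sq_eq_sum]
  calc ∑ i, ∑ j, (A * B) i j ^ 2
      ≤ ∑ i, ∑ j, (∑ l, A i l ^ 2) * (∑ l, B l j ^ 2) := by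
        refine Finset.sum_le_sum fun i _ => Finset.sum_le_sum fun j _ => ?_
        rw [Matrix.mul_apply]
        exact Finset.sum_mul_sq_le_sq_mul_sq Finset.univ _ _
    _ = (∑ i, ∑ l, A i l ^ 2) * (∑ l, ∑ j, B l j ^ 2) := by
        have hc : ∑ l, ∑ j, B l j ^ 2 = ∑ j : n, ∑ l, B l j ^ 2 := Finset.sum_comm
        rw [hc, Fintype.sum_mul_sum]

lemma dot_self_nonneg (v : m → ℝ) : 0 ≤ v ⬝ᵥ v :=
  Finset.sum_nonneg fun i _ => mul_self_nonneg _

lemma dot_sq_le (v w : m → ℝ) : (v ⬝ᵥ w) ^ 2 ≤ (v ⬝ᵥ v) * (w ⬝ᵥ w) := by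
  have h := Finset.sum_mul_sq_le_sq_mul_sq Finset.univ v w
  simp only [dotProduct, ← sq]
  exact h


lemma dot_le (v w : m → ℝ) : v ⬝ᵥ w ≤ Real.sqrt (v ⬝ᵥ v) * Real.sqrt (w ⬝ᵥ w) := by
  refine le_trans (le_abs_self _) (sq_le_imp (abs_nonneg _)
    (mul_nonneg (Real.sqrt_nonneg _) (Real.sqrt_nonneg _)) ?_)
  rw [sq_abs, mul_pow, Real.sq_sqrt (dot_self_nonneg v), Real.sq_sqrt (dot_self_nonneg w)]
  exact dot_sq_le v w

/-- column version of operator-type bound gives Frobenius bound for left multiplication -/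
lemma opb_left {M : Matrix m k ℝ} {s : ℝ} (hs : 0 ≤ s)
    (h : ∀ v : k → ℝ, (M *ᵥ v) ⬝ᵥ (M *ᵥ v) ≤ s ^ 2 * (v ⬝ᵥ v)) (C : Matrix k n ℝ) :
    fnorm (M * C) ≤ s * fnorm C := by
  refine sq_le_imp (fnorm_nonneg _) (mul_nonneg hs (fnorm_nonneg _)) ?_
  have hl : fnorm (M * C) ^ 2 = ∑ j : n, ∑ i : m, (M * C) i j ^ 2 := by
    rw [fnorm_sq_eq_sum]; exact Finset.sum_comm
  have hr : (s * fnorm C) ^ 2 = ∑ j : n, s ^ 2 * ∑ l : k, C l j ^ 2 := by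
    rw [mul_pow, fnorm_sq_eq_sum, Finset.sum_comm, Finset.mul_sum]
  rw [hl, hr]
  refine Finset.sum_le_sum fun j _ => ?_
  have := h (fun l => C l j)
  simp only [dotProduct, Matrix.mulVec, Matrix.mul_apply] at this ⊢
  calc ∑ i, (∑ l, M i l * C l j) ^ 2
      = ∑ i, (∑ l, M i l * C l j) * (∑ l, M i l * C l j) := by simp [sq]
    _ ≤ s ^ 2 * ∑ l, C l j * C l j := this
    _ = s ^ 2 * ∑ l, C l j ^ 2 := by simp [sq]

lemma opb_left_lower {M : Matrix m k ℝ} {c : ℝ}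
    (h : ∀ v : k → ℝ, c * (v ⬝ᵥ v) ≤ (M *ᵥ v) ⬝ᵥ (M *ᵥ v)) (C : Matrix k n ℝ) :
    c * fnorm C ^ 2 ≤ fnorm (M * C) ^ 2 := by
  have hl : c * fnorm C ^ 2 = ∑ j : n, c * ∑ l : k, C l j ^ 2 := by
    rw [fnorm_sq_eq_sum, Finset.sum_comm, Finset.mul_sum]
  have hr : fnorm (M * C) ^ 2 = ∑ j : n, ∑ i : m, (M * C) i j ^ 2 := by
    rw [fnorm_sq_eq_sum]; exact Finset.sum_comm
  rw [hl, hr]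
  refine Finset.sum_le_sum fun j _ => ?_
  have := h (fun l => C l j)
  simp only [dotProduct, Matrix.mulVec, Matrix.mul_apply] at this ⊢
  calc c * ∑ l, C l j ^ 2 = c * ∑ l, C l j * C l j := by simp [sq]
    _ ≤ ∑ i, (∑ l, M i l * C l j) * (∑ l, M i l * C l j) := this
    _ = ∑ i, (∑ l, M i l * C l j) ^ 2 := by simp [sq]

lemma mulVec_dot_self (M : Matrix m k ℝ) (v : k → ℝ) :
    (M *ᵥ v) ⬝ᵥ (M *ᵥ v) = ((Mᵀ * M) *ᵥ v) ⬝ᵥ v := by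
  rw [Matrix.dotProduct_mulVec, ← Matrix.mulVec_transpose, Matrix.mulVec_mulVec]

lemma opb_transpose {M : Matrix m k ℝ} {s : ℝ} (hs : 0 ≤ s)
    (h : ∀ v : k → ℝ, (M *ᵥ v) ⬝ᵥ (M *ᵥ v) ≤ s ^ 2 * (v ⬝ᵥ v)) :
    ∀ w : m → ℝ, (Mᵀ *ᵥ w) ⬝ᵥ (Mᵀ *ᵥ w) ≤ s ^ 2 * (w ⬝ᵥ w) := by
  intro w
  set u := Mᵀ *ᵥ w with hu
  have h1 : u ⬝ᵥ u = (M *ᵥ u) ⬝ᵥ w := by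
    rw [hu, mulVec_dot_self, Matrix.transpose_transpose, ← Matrix.mulVec_mulVec]
  have h2 : (M *ᵥ u) ⬝ᵥ w ≤ Real.sqrt ((M *ᵥ u) ⬝ᵥ (M *ᵥ u)) * Real.sqrt (w ⬝ᵥ w) := dot_le _ _
  have h3 : Real.sqrt ((M *ᵥ u) ⬝ᵥ (M *ᵥ u)) ≤ s * Real.sqrt (u ⬝ᵥ u) := by
    have := h u
    have hsq : s * Real.sqrt (u ⬝ᵥ u) = Real.sqrt (s ^ 2 * (u ⬝ᵥ u)) := by
      rw [Real.sqrt_mul (sq_nonneg s), Real.sqrt_sq hs]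
    rw [hsq]
    exact Real.sqrt_le_sqrt this
  have h4 : u ⬝ᵥ u ≤ s * Real.sqrt (u ⬝ᵥ u) * Real.sqrt (w ⬝ᵥ w) :=
    calc u ⬝ᵥ u = (M *ᵥ u) ⬝ᵥ w := h1
      _ ≤ Real.sqrt ((M *ᵥ u) ⬝ᵥ (M *ᵥ u)) * Real.sqrt (w ⬝ᵥ w) := h2
      _ ≤ s * Real.sqrt (u ⬝ᵥ u) * Real.sqrt (w ⬝ᵥ w) :=
        mul_le_mul_of_nonneg_right h3 (Real.sqrt_nonneg _)
  have hru : Real.sqrt (u ⬝ᵥ u) ^ 2 = u ⬝ᵥ u := Real.sq_sqrt (dot_self_nonneg u)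
  have hrw : Real.sqrt (w ⬝ᵥ w) ^ 2 = w ⬝ᵥ w := Real.sq_sqrt (dot_self_nonneg w)
  nlinarith [Real.sqrt_nonneg (u ⬝ᵥ u), Real.sqrt_nonneg (w ⬝ᵥ w),
    sq_nonneg (Real.sqrt (u ⬝ᵥ u) - s * Real.sqrt (w ⬝ᵥ w))]

lemma opb_mul {A : Matrix m k ℝ} {B : Matrix k n ℝ} {s t : ℝ} (ht : 0 ≤ t)
    (hA : ∀ v : k → ℝ, (A *ᵥ v) ⬝ᵥ (A *ᵥ v) ≤ s ^ 2 * (v ⬝ᵥ v))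
    (hB : ∀ v : n → ℝ, (B *ᵥ v) ⬝ᵥ (B *ᵥ v) ≤ t ^ 2 * (v ⬝ᵥ v)) :
    ∀ v : n → ℝ, ((A * B) *ᵥ v) ⬝ᵥ ((A * B) *ᵥ v) ≤ (s * t) ^ 2 * (v ⬝ᵥ v) := by
  intro v
  rw [← Matrix.mulVec_mulVec]
  calc (A *ᵥ (B *ᵥ v)) ⬝ᵥ (A *ᵥ (B *ᵥ v)) ≤ s ^ 2 * ((B *ᵥ v) ⬝ᵥ (B *ᵥ v)) := hA _
    _ ≤ s ^ 2 * (t ^ 2 * (v ⬝ᵥ v)) := by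
        refine mul_le_mul_of_nonneg_left (hB v) (sq_nonneg s)
    _ = (s * t) ^ 2 * (v ⬝ᵥ v) := by ring

/-- quadratic form bound via Frobenius norm -/
lemma quad_abs_le (N : Matrix k k ℝ) (v : k → ℝ) :
    |v ⬝ᵥ (N *ᵥ v)| ≤ fnorm N * (v ⬝ᵥ v) := by
  have hexp : v ⬝ᵥ (N *ᵥ v) = ∑ p : k × k, N p.1 p.2 * (v p.1 * v p.2) := by
    rw [Fintype.sum_prod_type (f := fun p : k × k => N p.1 p.2 * (v p.1 * v p.2))]
    simp only [dotProduct, Matrix.mulVec, Finset.mul_sum]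
    exact Finset.sum_congr rfl fun i _ => Finset.sum_congr rfl fun j _ => by ring
  refine sq_le_imp (abs_nonneg _) (mul_nonneg (fnorm_nonneg _) (dot_self_nonneg _)) ?_
  rw [sq_abs, hexp, mul_pow, fnorm_sq_eq_sum']
  have h := Finset.sum_mul_sq_le_sq_mul_sq Finset.univ (fun p : k × k => N p.1 p.2)
    (fun p : k × k => v p.1 * v p.2)
  refine le_trans h ?_
  have : ∑ p : k × k, (v p.1 * v p.2) ^ 2 = (v ⬝ᵥ v) ^ 2 := by
    rw [Fintype.sum_prod_type (f := fun p : k × k => (v p.1 * v p.2) ^ 2)]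
    simp only [dotProduct, ← sq]
    rw [sq (∑ i, v i ^ 2), Fintype.sum_mul_sum]
    refine Finset.sum_congr rfl fun i _ => Finset.sum_congr rfl fun j _ => by ring
  rw [this]

lemma fnorm_unit_mul [DecidableEq k] {u : Matrix m k ℝ} (hu : uᵀ * u = 1) (C : Matrix k n ℝ) :
    fnorm (u * C) = fnorm C := by
  unfold fnorm
  congr 1
  unfold finner
  rw [Matrix.transpose_mul, show u * C * (Cᵀ * uᵀ) = u * (C * Cᵀ * uᵀ) by
    simp only [Matrix.mul_assoc]]
  rw [Matrix.trace_mul_comm, Matrix.mul_assoc, hu, Matrix.mul_one]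

lemma trace_sym_skew {S K : Matrix k k ℝ} (hS : Sᵀ = S) (hK : Kᵀ = -K) :
    Matrix.trace (S * K) = 0 := by
  have h1 : Matrix.trace (S * K) = Matrix.trace ((S * K)ᵀ) := (Matrix.trace_transpose _).symm
  rw [Matrix.transpose_mul, hS, hK, Matrix.neg_mul, Matrix.trace_neg] at h1
  have h2 := Matrix.trace_mul_comm S K
  linarith [h1, h2]


lemma opb_right {M : Matrix k n ℝ} {s : ℝ} (hs : 0 ≤ s)
    (h : ∀ v : k → ℝ, (Mᵀ *ᵥ v) ⬝ᵥ (Mᵀ *ᵥ v) ≤ s ^ 2 * (v ⬝ᵥ v)) (C : Matrix m k ℝ) :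
    fnorm (C * M) ≤ s * fnorm C := by
  rw [← fnorm_transpose (C * M), Matrix.transpose_mul, ← fnorm_transpose C]
  exact opb_left hs h Cᵀ

lemma opb_add_one [DecidableEq k] {P : Matrix k k ℝ} {s : ℝ} (hs : 0 ≤ s)
    (h : ∀ v : k → ℝ, (P *ᵥ v) ⬝ᵥ (P *ᵥ v) ≤ s ^ 2 * (v ⬝ᵥ v)) :
    ∀ v : k → ℝ, ((P + 1) *ᵥ v) ⬝ᵥ ((P + 1) *ᵥ v) ≤ (s + 1) ^ 2 * (v ⬝ᵥ v) := by
  intro v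
  have hv : (P + 1) *ᵥ v = P *ᵥ v + v := by
    rw [Matrix.add_mulVec, Matrix.one_mulVec]
  have hcross : (P *ᵥ v) ⬝ᵥ v ≤ s * (v ⬝ᵥ v) := by
    refine le_trans (dot_le _ _) ?_
    have h1 : Real.sqrt ((P *ᵥ v) ⬝ᵥ (P *ᵥ v)) ≤ s * Real.sqrt (v ⬝ᵥ v) := by
      have hsq : s * Real.sqrt (v ⬝ᵥ v) = Real.sqrt (s ^ 2 * (v ⬝ᵥ v)) := by
        rw [Real.sqrt_mul (sq_nonneg s), Real.sqrt_sq hs]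
      rw [hsq]; exact Real.sqrt_le_sqrt (h v)
    calc Real.sqrt ((P *ᵥ v) ⬝ᵥ (P *ᵥ v)) * Real.sqrt (v ⬝ᵥ v)
        ≤ s * Real.sqrt (v ⬝ᵥ v) * Real.sqrt (v ⬝ᵥ v) :=
          mul_le_mul_of_nonneg_right h1 (Real.sqrt_nonneg _)
      _ = s * (Real.sqrt (v ⬝ᵥ v) ^ 2) := by ring
      _ = s * (v ⬝ᵥ v) := by rw [Real.sq_sqrt (dot_self_nonneg v)]
  have hcross' : v ⬝ᵥ (P *ᵥ v) ≤ s * (v ⬝ᵥ v) := by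
    rw [dotProduct_comm]; exact hcross
  rw [hv, dotProduct_add, add_dotProduct, add_dotProduct]
  have := h v
  nlinarith [dot_self_nonneg v]

lemma psd_trace_nonneg {M : Matrix k k ℝ} [DecidableEq k] (hM : M.PosSemidef) :
    0 ≤ Matrix.trace M := by
  refine Finset.sum_nonneg fun i _ => ?_
  have := hM.dotProduct_mulVec_nonneg (Pi.single i 1)
  simpa [Matrix.mulVec_single, single_dotProduct] using this

omit [Fintype k] in
lemma real_herm_eq_transpose {M : Matrix k k ℝ} (hM : M.IsHermitian) : Mᵀ = M := by
  rw [← Matrix.conjTranspose_eq_transpose_of_trivial]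
  exact hM

lemma exists_sqrt [DecidableEq k] {P : Matrix k k ℝ} (hP : P.PosSemidef) :
    ∃ R : Matrix k k ℝ, R.PosSemidef ∧ Rᵀ = R ∧ R * R = P :=
  by
    open scoped MatrixOrder in
    exact ⟨CFC.sqrt P, (CFC.sqrt_nonneg P).posSemidef,
      real_herm_eq_transpose (CFC.sqrt_nonneg P).posSemidef.1, CFC.sqrt_mul_sqrt_self P hP.nonneg⟩

lemma trace_mul_psd_le [DecidableEq k] {P M : Matrix k k ℝ} (hP : P.PosSemidef)
    (hM : ∀ v : k → ℝ, (Mᵀ *ᵥ v) ⬝ᵥ (Mᵀ *ᵥ v) ≤ 1 ^ 2 * (v ⬝ᵥ v)) :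
    Matrix.trace (M * P) ≤ Matrix.trace P := by
  obtain ⟨R, hRpsd, hRt, hRR⟩ := exists_sqrt hP
  have h1 : Matrix.trace (M * P) = finner (R * M) R := by
    rw [finner, hRt, ← hRR, ← Matrix.mul_assoc, Matrix.trace_mul_cycle]
  have h2 : finner (R * M) R ≤ fnorm (R * M) * fnorm R := finner_le _ _
  have h3 : fnorm (R * M) ≤ 1 * fnorm R := by
    rw [← fnorm_transpose (R * M), Matrix.transpose_mul, ← fnorm_transpose R]
    exact opb_left zero_le_one hM Rᵀ
  have h4 : fnorm R * fnorm R = Matrix.trace P := by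
    have := fnorm_sq R
    rw [finner, hRt, hRR] at this
    nlinarith [this]
  nlinarith [fnorm_nonneg R, fnorm_nonneg (R * M)]

lemma fnorm_sq_sub (A B : Matrix m k ℝ) :
    fnorm (A - B) ^ 2 = fnorm A ^ 2 - 2 * finner A B + fnorm B ^ 2 := by
  have h := fnorm_sq_add A (-B)
  have hneg : finner A (-B) = -finner A B := by
    simp [finner_eq_sum, Finset.sum_neg_distrib]
  rw [← sub_eq_add_neg] at h
  rw [h, hneg, fnorm_neg]
  ring

/-- `fnorm (P - 1) ≤ fnorm (P * P - 1)` for `P` symmetric positive semidefinite. -/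
lemma fnorm_sub_one_le [DecidableEq k] {P : Matrix k k ℝ} (hP : P.PosSemidef) :
    fnorm (P - 1) ≤ fnorm (P * P - 1) := by
  have hPt : Pᵀ = P := real_herm_eq_transpose hP.1
  refine sq_le_imp (fnorm_nonneg _) (fnorm_nonneg _) ?_
  have e1 : fnorm (P - 1) ^ 2 = Matrix.trace ((P - 1) * (P - 1)) := by
    rw [fnorm_sq, finner]
    congr 2
    rw [Matrix.transpose_sub, hPt, Matrix.transpose_one]
  have e2 : fnorm (P * P - 1) ^ 2 = Matrix.trace ((P * P - 1) * (P * P - 1)) := by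
    rw [fnorm_sq, finner]
    congr 2
    rw [Matrix.transpose_sub, Matrix.transpose_mul, hPt, Matrix.transpose_one]
  rw [e1, e2]
  have hid : (P * P - 1) * (P * P - 1) - (P - 1) * (P - 1)
      = (P - 1) * (P * P + P + P) * (P - 1) := by
    noncomm_ring
  have hpsd : ((P - 1) * (P * P + P + P) * (P - 1)).PosSemidef := by
    have hmid : (P * P + P + P).PosSemidef := by
      have h2 : (P * P).PosSemidef := by
        have := hP.pow 2
        rwa [pow_two] at this
      exact (h2.add hP).add hP
    have := hmid.conjTranspose_mul_mul_same (P - 1)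
    have hct : (P - 1)ᴴ = P - 1 := by
      rw [Matrix.conjTranspose_eq_transpose_of_trivial, Matrix.transpose_sub, hPt,
        Matrix.transpose_one]
    rwa [hct] at this
  have htr := psd_trace_nonneg hpsd
  rw [← hid, Matrix.trace_sub] at htr
  linarith


lemma opb_unit [DecidableEq k] {u : Matrix m k ℝ} (hu : uᵀ * u = 1) :
    ∀ v : k → ℝ, (u *ᵥ v) ⬝ᵥ (u *ᵥ v) ≤ 1 ^ 2 * (v ⬝ᵥ v) := by
  intro v
  rw [mulVec_dot_self, hu, Matrix.one_mulVec, one_pow, one_mul]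

lemma proj_opt [DecidableEq k] {x x' y : Matrix m k ℝ} {P : Matrix k k ℝ}
    (hx'1 : x'ᵀ * x' = 1) (hPpsd : P.PosSemidef) (hfact : x = x' * P)
    (hy : yᵀ * y = 1) : fnorm (x - x') ≤ fnorm (x - y) := by
  have hM : ∀ v : k → ℝ, ((yᵀ * x')ᵀ *ᵥ v) ⬝ᵥ ((yᵀ * x')ᵀ *ᵥ v) ≤ 1 ^ 2 * (v ⬝ᵥ v) := by
    intro v
    have h1 : (yᵀ * x')ᵀ = x'ᵀ * y := by
      rw [Matrix.transpose_mul, Matrix.transpose_transpose]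
    rw [h1]
    have := opb_mul (A := x'ᵀ) (B := y) zero_le_one
      (opb_transpose zero_le_one (opb_unit hx'1)) (opb_unit hy) v
    simpa using this
  have e3 : Matrix.trace ((yᵀ * x') * P) ≤ Matrix.trace P := trace_mul_psd_le hPpsd hM
  have e1 : finner x x' = Matrix.trace P := by
    rw [finner, hfact, Matrix.trace_mul_cycle, hx'1, Matrix.one_mul]
  have e2 : finner x y = Matrix.trace ((yᵀ * x') * P) := by
    rw [finner, hfact, Matrix.trace_mul_cycle x' P yᵀ]
  have e4 : fnorm x' ^ 2 = fnorm y ^ 2 := by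
    rw [fnorm_sq, fnorm_sq, finner, finner, Matrix.trace_mul_comm, hx'1]
    rw [Matrix.trace_mul_comm y, hy]
  refine sq_le_imp (fnorm_nonneg _) (fnorm_nonneg _) ?_
  rw [fnorm_sq_sub, fnorm_sq_sub]
  linarith [e1, e2, e3, e4]

lemma polar_exists [DecidableEq k] {x : Matrix m k ℝ} {ε : ℝ} (hε1 : ε < 1)
    (hx : fnorm (xᵀ * x - 1) ≤ ε) :
    ∃ (x' : Matrix m k ℝ) (P : Matrix k k ℝ), x'ᵀ * x' = 1 ∧ P.PosDef ∧ Pᵀ = P ∧ P * P = xᵀ * x ∧ x = x' * P := by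
  set N := xᵀ * x - 1 with hN
  have hquadN : ∀ v : k → ℝ, |v ⬝ᵥ (N *ᵥ v)| ≤ ε * (v ⬝ᵥ v) := fun v =>
    le_trans (quad_abs_le N v) (mul_le_mul_of_nonneg_right hx (dot_self_nonneg v))
  have hdecomp : ∀ v : k → ℝ, (x *ᵥ v) ⬝ᵥ (x *ᵥ v) = v ⬝ᵥ v + v ⬝ᵥ (N *ᵥ v) := by
    intro v
    rw [mulVec_dot_self]
    have hQ : xᵀ * x = N + 1 := by rw [hN]; abel
    rw [hQ, Matrix.add_mulVec, Matrix.one_mulVec, add_dotProduct, dotProduct_comm]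
    ring
  have hlow : ∀ v : k → ℝ, (1 - ε) * (v ⬝ᵥ v) ≤ (x *ᵥ v) ⬝ᵥ (x *ᵥ v) := by
    intro v
    rw [hdecomp v]
    have h2 := (abs_le.mp (hquadN v)).1
    linarith only [h2]
  have hQpd : (xᵀ * x).PosDef := by
    refine Matrix.PosDef.of_dotProduct_mulVec_pos ?_ ?_
    · simpa using Matrix.isHermitian_conjTranspose_mul_self x
    · intro v hv
      have hvv : 0 < v ⬝ᵥ v := by
        rcases lt_or_eq_of_le (dot_self_nonneg v) with h | h
        · exact h
        · exact absurd (dotProduct_self_eq_zero.mp h.symm) hv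
      have h2 : 0 < v ⬝ᵥ ((xᵀ * x) *ᵥ v) := by
        have h3 := hlow v
        have h4 : (x *ᵥ v) ⬝ᵥ (x *ᵥ v) = v ⬝ᵥ ((xᵀ * x) *ᵥ v) := by
          rw [mulVec_dot_self, dotProduct_comm]
        nlinarith
      simpa using h2
  obtain ⟨P, hPpsd, hPt, hPP⟩ := exists_sqrt hQpd.posSemidef
  have hPpd : P.PosDef := by
    refine Matrix.PosDef.of_dotProduct_mulVec_pos hPpsd.1 fun v hv => ?_
    obtain ⟨R, hRpsd, hRt, hRR⟩ := exists_sqrt hPpsd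
    have h1 : v ⬝ᵥ (P *ᵥ v) = (R *ᵥ v) ⬝ᵥ (R *ᵥ v) := by
      rw [mulVec_dot_self, hRt, hRR, dotProduct_comm]
    have h2 : 0 ≤ v ⬝ᵥ (P *ᵥ v) := by rw [h1]; exact dot_self_nonneg _
    rcases lt_or_eq_of_le h2 with h | h
    · simpa using h
    · exfalso
      have hR0 : R *ᵥ v = 0 := by
        rw [h1] at h
        exact dotProduct_self_eq_zero.mp h.symm
      have hP0 : P *ᵥ v = 0 := by
        rw [← hRR, ← Matrix.mulVec_mulVec, hR0, Matrix.mulVec_zero]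
      have hQ0 : (xᵀ * x) *ᵥ v = 0 := by
        rw [← hPP, ← Matrix.mulVec_mulVec, hP0, Matrix.mulVec_zero]
      have := hQpd.dotProduct_mulVec_pos hv
      rw [hQ0] at this
      simp at this
  have hPunit : IsUnit P.det := by
    have := hPpd.det_pos
    exact isUnit_iff_ne_zero.mpr (ne_of_gt this)
  refine ⟨x * P⁻¹, P, ?_, hPpd, hPt, hPP, ?_⟩
  · have h1 : (x * P⁻¹)ᵀ * (x * P⁻¹) = (P⁻¹)ᵀ * ((xᵀ * x) * P⁻¹) := by
      rw [Matrix.transpose_mul]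
      simp only [Matrix.mul_assoc]
    rw [h1, ← hPP, Matrix.transpose_nonsing_inv, hPt]
    have h2 : P * P * P⁻¹ = P := by
      rw [Matrix.mul_assoc, Matrix.mul_nonsing_inv _ hPunit, Matrix.mul_one]
    rw [h2, Matrix.nonsing_inv_mul _ hPunit]
  · rw [Matrix.mul_assoc, Matrix.nonsing_inv_mul _ hPunit, Matrix.mul_one]

lemma rgrad_cross {d r : ℕ} (Df : Matrix (Fin d) (Fin r) ℝ → Matrix (Fin d) (Fin r) ℝ)
    (x : Matrix (Fin d) (Fin r) ℝ) :
    finner (rgrad Df x) (x * (xᵀ * x - 1)) = 0 := by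
  set N := xᵀ * x - 1 with hN
  have hNt : Nᵀ = N := by
    rw [hN, Matrix.transpose_sub, Matrix.transpose_mul, Matrix.transpose_transpose,
      Matrix.transpose_one]
  set K := mskew (Df x * xᵀ) with hK
  have hKskew : Kᵀ = -K := by
    rw [hK, mskew, Matrix.transpose_smul, Matrix.transpose_sub, Matrix.transpose_transpose,
      ← smul_neg, neg_sub]
  have hSsym : (x * N * xᵀ)ᵀ = x * N * xᵀ := by
    rw [Matrix.transpose_mul, Matrix.transpose_mul, Matrix.transpose_transpose, hNt,
      Matrix.mul_assoc]
  have h1 : finner (rgrad Df x) (x * N) = Matrix.trace ((x * N * xᵀ) * K) := by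
    rw [rgrad, ← hK, finner, Matrix.transpose_mul, hNt]
    rw [show K * x * (N * xᵀ) = K * (x * N * xᵀ) by simp only [Matrix.mul_assoc]]
    rw [Matrix.trace_mul_comm]
  rw [h1]
  exact trace_sym_skew hSsym hKskew

lemma meritgrad_cross {d r : ℕ} (Df : Matrix (Fin d) (Fin r) ℝ → Matrix (Fin d) (Fin r) ℝ)
    {x' : Matrix (Fin d) (Fin r) ℝ} {P : Matrix (Fin r) (Fin r) ℝ}
    (hx'1 : x'ᵀ * x' = 1) (hPt : Pᵀ = P) :
    finner (meritGradSt Df x') (x' * (P - 1)) = 0 := by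
  set D := P - 1 with hD
  have hDt : Dᵀ = D := by rw [hD, Matrix.transpose_sub, hPt, Matrix.transpose_one]
  set E := x'ᵀ * Df x' with hE
  have ta : Matrix.trace (Df x' * (D * x'ᵀ)) = Matrix.trace (E * D) := by
    rw [← Matrix.mul_assoc, Matrix.trace_mul_cycle, hE, Matrix.mul_assoc]
  have tb : Matrix.trace ((x' * msym E) * (D * x'ᵀ)) = Matrix.trace (msym E * D) := by
    rw [show (x' * msym E) * (D * x'ᵀ) = x' * (msym E * D * x'ᵀ) by simp only [Matrix.mul_assoc]]
    rw [Matrix.trace_mul_comm]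
    rw [show (msym E * D * x'ᵀ) * x' = msym E * D * (x'ᵀ * x') by simp only [Matrix.mul_assoc]]
    rw [hx'1, Matrix.mul_one]
  have tc : Matrix.trace (msym E * D) = Matrix.trace (E * D) := by
    rw [msym, Matrix.smul_mul, Matrix.trace_smul, Matrix.add_mul, Matrix.trace_add]
    have h1 : Matrix.trace (Eᵀ * D) = Matrix.trace (E * D) := by
      rw [← Matrix.trace_transpose (Eᵀ * D), Matrix.transpose_mul, Matrix.transpose_transpose,
        hDt, Matrix.trace_mul_comm]
    rw [h1]
    simp
    ring
  have hmain : finner (meritGradSt Df x') (x' * D) =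
      Matrix.trace (Df x' * (D * x'ᵀ)) - Matrix.trace ((x' * msym E) * (D * x'ᵀ)) := by
    rw [meritGradSt, ← hE, finner, Matrix.transpose_mul, hDt, Matrix.sub_mul, Matrix.trace_sub]
  rw [hmain, ta, tb, tc, sub_self]

lemma merit_on_st {d r : ℕ} (f : Matrix (Fin d) (Fin r) ℝ → ℝ)
    (Df : Matrix (Fin d) (Fin r) ℝ → Matrix (Fin d) (Fin r) ℝ) (γ : ℝ)
    {x' : Matrix (Fin d) (Fin r) ℝ} (hx'1 : x'ᵀ * x' = 1) :
    merit f Df γ x' = f x' := by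
  rw [merit, hx'1, sub_self, finner_zero_right, fnorm_zero]
  ring

lemma fdist_le_of_mem {d r : ℕ} {S : Set (Matrix (Fin d) (Fin r) ℝ)}
    {y : Matrix (Fin d) (Fin r) ℝ} (hy : y ∈ S) (x : Matrix (Fin d) (Fin r) ℝ) :
    fdist S x ≤ fnorm (x - y) := by
  refine csInf_le ⟨0, fun b hb => ?_⟩ ⟨y, hy, rfl⟩
  obtain ⟨y', _, rfl⟩ := hb
  exact fnorm_nonneg _

lemma fdist_exists {d r : ℕ} {S : Set (Matrix (Fin d) (Fin r) ℝ)} (hS : S.Nonempty)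
    {x : Matrix (Fin d) (Fin r) ℝ} {δ θ : ℝ} (hθ : 0 < θ) (h : fdist S x ≤ δ) :
    ∃ y ∈ S, fnorm (x - y) < δ + θ := by
  by_contra hc
  push_neg at hc
  have h2 : δ + θ ≤ fdist S x := by
    refine le_csInf (hS.image _) fun b hb => ?_
    obtain ⟨y, hy, rfl⟩ := hb
    exact hc y hy
  linarith


set_option maxHeartbeats 1000000 in
/-- pseudo gradient domination. Let `ε ∈ (0,3/4)`, `λ, μ, δ > 0`, let `f` be
differentiable with `L̂`-Lipschitz gradient `Df`, `‖∇f(u)‖_F ≤ L̂` on `St(d,r)^ε`. Let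
`S ⊆ St(d,r)` be a set of local minimizers of `f` on `St(d,r)` with common value `f*_S`, let the
local Riemannian PŁ condition hold on `{z ∈ St(d,r) : dist(S,z) ≤ 2δ}`, and assume the descent
inequality for the merit function `𝓛` between `x ∈ St(d,r)^ε` and `x' = Proj_St(x)` with
constant `L' > 0`. Then for every `x ∈ St(d,r)^ε` with `dist(S,x) ≤ δ`,
`𝓛(x) − f*_S ≤ (1/μ')‖Λ(x)‖_F²` with
`1/μ' = max{1/μ, (2(3+2ε)²L̂² + μL')/(2μλ²(1−ε)²)}`. -/
theorem pseudo_gradient_domination {d r : ℕ} (ε lam μ δ Lhat L' γ fstar : ℝ)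
    (hε : ε ∈ Set.Ioo (0 : ℝ) (3 / 4)) (hlam : 0 < lam) (hμ : 0 < μ) (hδ : 0 < δ)
    (hL' : 0 < L')
    (f : Matrix (Fin d) (Fin r) ℝ → ℝ)
    (Df : Matrix (Fin d) (Fin r) ℝ → Matrix (Fin d) (Fin r) ℝ)
    (hLip : ∀ u v : Matrix (Fin d) (Fin r) ℝ, fnorm (Df u - Df v) ≤ Lhat * fnorm (u - v))
    (hBnd : ∀ u ∈ StEps d r ε, fnorm (Df u) ≤ Lhat)
    (S : Set (Matrix (Fin d) (Fin r) ℝ)) (hSsub : S ⊆ St d r) (hSne : S.Nonempty)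
    (hSmin : ∀ y ∈ S, ∃ η > (0 : ℝ), ∀ z ∈ St d r, fnorm (z - y) ≤ η → f y ≤ f z)
    (hSval : ∀ y ∈ S, f y = fstar)
    (hPL : ∀ z ∈ St d r, fdist S z ≤ 2 * δ →
      |f z - fstar| ≤ (2 * μ)⁻¹ * fnorm (rgrad Df z) ^ 2)
    (hdescent : ∀ x x' : Matrix (Fin d) (Fin r) ℝ, x ∈ StEps d r ε → IsPolarFactor x x' →
      merit f Df γ x ≤ merit f Df γ x' + finner (meritGradSt Df x') (x - x')
        + L' / 2 * fnorm (x - x') ^ 2) :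
    ∀ x ∈ StEps d r ε, fdist S x ≤ δ →
      merit f Df γ x - fstar ≤
        max (1 / μ) ((2 * (3 + 2 * ε) ^ 2 * Lhat ^ 2 + μ * L') / (2 * μ * lam ^ 2 * (1 - ε) ^ 2))
          * fnorm (landing Df lam x) ^ 2 := by
  obtain ⟨hε0, hε34⟩ := hε
  intro x hxeps hxdist
  have hε1 : ε < 1 := by linarith
  have hxN : fnorm (xᵀ * x - 1) ≤ ε := hxeps
  obtain ⟨x', P, hx'1, hPpd, hPt, hPP, hfact⟩ := polar_exists hε1 hxN
  have hLhat0 : 0 ≤ Lhat := le_trans (fnorm_nonneg _) (hBnd x hxeps)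
  have hx'eps : x' ∈ StEps d r ε := by
    show fnorm (x'ᵀ * x' - 1) ≤ ε
    rw [hx'1, sub_self, fnorm_zero]
    exact hε0.le
  have hAle : fnorm (Df x) ≤ Lhat := hBnd x hxeps
  have hBle : fnorm (Df x') ≤ Lhat := hBnd x' hx'eps
  have hxsub : x - x' = x' * (P - 1) := by
    rw [Matrix.mul_sub, Matrix.mul_one, ← hfact]
  have hhP : fnorm (x - x') = fnorm (P - 1) := by rw [hxsub, fnorm_unit_mul hx'1]
  have hhN : fnorm (x - x') ≤ fnorm (xᵀ * x - 1) := by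
    rw [hhP, ← hPP]
    exact fnorm_sub_one_le hPpd.posSemidef
  have hh0 : (0:ℝ) ≤ fnorm (x - x') := fnorm_nonneg _
  have hquadN : ∀ v : Fin r → ℝ, |v ⬝ᵥ ((xᵀ * x - 1) *ᵥ v)| ≤ ε * (v ⬝ᵥ v) := fun v =>
    le_trans (quad_abs_le _ v) (mul_le_mul_of_nonneg_right hxN (dot_self_nonneg v))
  have hdecomp : ∀ v : Fin r → ℝ,
      (x *ᵥ v) ⬝ᵥ (x *ᵥ v) = v ⬝ᵥ v + v ⬝ᵥ ((xᵀ * x - 1) *ᵥ v) := by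
    intro v
    rw [mulVec_dot_self]
    have hQ : xᵀ * x = (xᵀ * x - 1) + 1 := by abel
    calc ((xᵀ * x) *ᵥ v) ⬝ᵥ v = (((xᵀ * x - 1) + 1) *ᵥ v) ⬝ᵥ v := by rw [← hQ]
      _ = ((xᵀ * x - 1) *ᵥ v) ⬝ᵥ v + v ⬝ᵥ v := by
          rw [Matrix.add_mulVec, Matrix.one_mulVec, add_dotProduct]
      _ = v ⬝ᵥ v + v ⬝ᵥ ((xᵀ * x - 1) *ᵥ v) := by
          rw [dotProduct_comm]; ring
  have hopbx : ∀ v : Fin r → ℝ,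
      (x *ᵥ v) ⬝ᵥ (x *ᵥ v) ≤ (Real.sqrt (1 + ε)) ^ 2 * (v ⬝ᵥ v) := by
    intro v
    rw [Real.sq_sqrt (by linarith : (0:ℝ) ≤ 1 + ε), hdecomp v]
    have h2 := (abs_le.mp (hquadN v)).2
    linarith only [h2]
  have hlowx : ∀ v : Fin r → ℝ, (1 - ε) * (v ⬝ᵥ v) ≤ (x *ᵥ v) ⬝ᵥ (x *ᵥ v) := by
    intro v
    rw [hdecomp v]
    have h2 := (abs_le.mp (hquadN v)).1
    linarith only [h2]
  set s := Real.sqrt (1 + ε) with hs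
  have hs0 : 0 ≤ s := Real.sqrt_nonneg _
  have hsle : s ≤ 1 + ε := by
    rw [hs]
    have h1 : (1:ℝ) + ε ≤ (1 + ε) ^ 2 := by
      nlinarith only [mul_nonneg hε0.le (by linarith : (0:ℝ) ≤ 1 + ε)]
    calc Real.sqrt (1 + ε) ≤ Real.sqrt ((1 + ε) ^ 2) := Real.sqrt_le_sqrt h1
      _ = 1 + ε := Real.sqrt_sq (by linarith)
  have hopbP : ∀ v : Fin r → ℝ, (P *ᵥ v) ⬝ᵥ (P *ᵥ v) ≤ s ^ 2 * (v ⬝ᵥ v) := by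
    intro v
    have h1 : (P *ᵥ v) ⬝ᵥ (P *ᵥ v) = (x *ᵥ v) ⬝ᵥ (x *ᵥ v) := by
      rw [mulVec_dot_self, mulVec_dot_self, hPt, hPP]
    rw [h1]
    exact hopbx v
  have hNfact : (xᵀ * x - 1) = (P - 1) * (P + 1) := by rw [← hPP]; noncomm_ring
  have hNle : fnorm (xᵀ * x - 1) ≤ (2 + ε) * fnorm (x - x') := by
    rw [hNfact, hhP]
    have hP1t : (P + 1)ᵀ = P + 1 := by rw [Matrix.transpose_add, hPt, Matrix.transpose_one]
    have hb : fnorm ((P - 1) * (P + 1)) ≤ (s + 1) * fnorm (P - 1) := by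
      refine opb_right (by linarith) ?_ (P - 1)
      rw [hP1t]
      exact opb_add_one hs0 hopbP
    refine le_trans hb (mul_le_mul_of_nonneg_right (by linarith) (fnorm_nonneg _))
  have hABle : fnorm (Df x - Df x') ≤ Lhat * fnorm (x - x') := hLip x x'
  set A := Df x with hA
  set B := Df x' with hB
  have hg1 : rgrad Df x = (2:ℝ)⁻¹ • (A * (xᵀ * x) - x * (Aᵀ * x)) := by
    rw [rgrad, ← hA, mskew, Matrix.transpose_mul, Matrix.transpose_transpose,
      Matrix.smul_mul, Matrix.sub_mul]
    simp only [Matrix.mul_assoc]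
  have hg2 : rgrad Df x' = (2:ℝ)⁻¹ • (B - x' * (Bᵀ * x')) := by
    rw [rgrad, ← hB, mskew, Matrix.transpose_mul, Matrix.transpose_transpose,
      Matrix.smul_mul, Matrix.sub_mul]
    simp only [Matrix.mul_assoc]
    rw [hx'1, Matrix.mul_one]
  have hEid : A * (xᵀ * x) - x * (Aᵀ * x) - (B - x' * (Bᵀ * x')) =
      A * (xᵀ * x - 1) + (A - B) - (x - x') * (Aᵀ * x) - x' * ((Aᵀ - Bᵀ) * x)
        - x' * (Bᵀ * (x - x')) := by
    simp only [Matrix.mul_sub, Matrix.sub_mul, Matrix.mul_one]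
    abel
  have hgdiff : fnorm (rgrad Df x - rgrad Df x')
      ≤ (3 + 2 * ε) * Lhat * fnorm (x - x') := by
    rw [hg1, hg2, ← smul_sub, fnorm_smul, hEid]
    have habs2 : |(2:ℝ)⁻¹| = 2⁻¹ := by norm_num
    rw [habs2]
    have t1 : fnorm (A * (xᵀ * x - 1)) ≤ Lhat * ((2 + ε) * fnorm (x - x')) :=
      le_trans (fnorm_mul_le _ _) (mul_le_mul hAle hNle (fnorm_nonneg _) hLhat0)
    have t2 : fnorm (A - B) ≤ Lhat * fnorm (x - x') := hABle
    have t3 : fnorm ((x - x') * (Aᵀ * x)) ≤ s * (fnorm (x - x') * Lhat) := by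
      rw [show (x - x') * (Aᵀ * x) = ((x - x') * Aᵀ) * x from by rw [Matrix.mul_assoc]]
      refine le_trans (opb_right hs0 (opb_transpose hs0 hopbx) _) ?_
      refine mul_le_mul_of_nonneg_left ?_ hs0
      refine le_trans (fnorm_mul_le _ _) ?_
      rw [fnorm_transpose]
      exact mul_le_mul_of_nonneg_left hAle (fnorm_nonneg _)
    have t4 : fnorm (x' * ((Aᵀ - Bᵀ) * x)) ≤ s * (Lhat * fnorm (x - x')) := by
      rw [fnorm_unit_mul hx'1]
      refine le_trans (opb_right hs0 (opb_transpose hs0 hopbx) _) ?_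
      refine mul_le_mul_of_nonneg_left ?_ hs0
      rw [show Aᵀ - Bᵀ = (A - B)ᵀ from (Matrix.transpose_sub A B).symm, fnorm_transpose]
      exact hABle
    have t5 : fnorm (x' * (Bᵀ * (x - x'))) ≤ Lhat * fnorm (x - x') := by
      rw [fnorm_unit_mul hx'1]
      refine le_trans (fnorm_mul_le _ _) ?_
      rw [fnorm_transpose]
      exact mul_le_mul hBle le_rfl (fnorm_nonneg _) hLhat0
    have tri : fnorm (A * (xᵀ * x - 1) + (A - B) - (x - x') * (Aᵀ * x)
          - x' * ((Aᵀ - Bᵀ) * x) - x' * (Bᵀ * (x - x')))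
        ≤ fnorm (A * (xᵀ * x - 1)) + fnorm (A - B) + fnorm ((x - x') * (Aᵀ * x))
          + fnorm (x' * ((Aᵀ - Bᵀ) * x)) + fnorm (x' * (Bᵀ * (x - x'))) := by
      refine le_trans (fnorm_sub_le _ _) ?_
      refine add_le_add ?_ le_rfl
      refine le_trans (fnorm_sub_le _ _) ?_
      refine add_le_add ?_ le_rfl
      refine le_trans (fnorm_sub_le _ _) ?_
      refine add_le_add ?_ le_rfl
      exact fnorm_add_le _ _
    have total : fnorm (A * (xᵀ * x - 1) + (A - B) - (x - x') * (Aᵀ * x)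
          - x' * ((Aᵀ - Bᵀ) * x) - x' * (Bᵀ * (x - x')))
        ≤ Lhat * ((2 + ε) * fnorm (x - x')) + Lhat * fnorm (x - x')
          + s * (fnorm (x - x') * Lhat) + s * (Lhat * fnorm (x - x'))
          + Lhat * fnorm (x - x') := by
      linarith only [tri, t1, t2, t3, t4, t5]
    have hfin : Lhat * ((2 + ε) * fnorm (x - x')) + Lhat * fnorm (x - x')
          + s * (fnorm (x - x') * Lhat) + s * (Lhat * fnorm (x - x'))
          + Lhat * fnorm (x - x')
        ≤ 2 * ((3 + 2 * ε) * Lhat * fnorm (x - x')) := by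
      nlinarith only [mul_nonneg (by linarith only [hsle, hε0] : (0:ℝ) ≤ 2 + 3 * ε - 2 * s)
        (mul_nonneg hLhat0 hh0)]
    linarith only [total, hfin]
  have hG'le : fnorm (rgrad Df x')
      ≤ fnorm (rgrad Df x) + (3 + 2 * ε) * Lhat * fnorm (x - x') := by
    have h1 : fnorm (rgrad Df x')
        ≤ fnorm (rgrad Df x' - rgrad Df x) + fnorm (rgrad Df x) := by
      have h2 := fnorm_add_le (rgrad Df x' - rgrad Df x) (rgrad Df x)
      rwa [sub_add_cancel] at h2
    rw [fnorm_sub_rev] at h1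
    linarith only [h1, hgdiff]
  have hT : fnorm (landing Df lam x) ^ 2 =
      fnorm (rgrad Df x) ^ 2 + lam ^ 2 * fnorm (x * (xᵀ * x - 1)) ^ 2 := by
    rw [landing, fnorm_sq_add, finner_smul_right, rgrad_cross, mul_zero, mul_zero,
      fnorm_smul, mul_pow, sq_abs]
    ring
  have hWlow : (1 - ε) * fnorm (xᵀ * x - 1) ^ 2 ≤ fnorm (x * (xᵀ * x - 1)) ^ 2 :=
    opb_left_lower hlowx _
  have hmg0 : finner (meritGradSt Df x') (x - x') = 0 := by
    rw [hxsub]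
    exact meritgrad_cross Df hx'1 hPt
  have hmx' : merit f Df γ x' = f x' := merit_on_st f Df γ hx'1
  have hdesc := hdescent x x' hxeps ⟨hx'1, P, hPpd, hfact⟩
  rw [hmx', hmg0, add_zero] at hdesc
  have hproj : ∀ y ∈ S, fnorm (x - x') ≤ fnorm (x - y) := fun y hy =>
    proj_opt hx'1 hPpd.posSemidef hfact (hSsub hy)
  have hxx'd : fnorm (x - x') ≤ δ := by
    refine le_of_forall_pos_le_add fun θ hθ => ?_
    obtain ⟨y, hy, hlt⟩ := fdist_exists hSne hθ hxdist
    exact le_trans (hproj y hy) hlt.le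
  have hd2 : fdist S x' ≤ 2 * δ := by
    refine le_of_forall_pos_le_add fun θ hθ => ?_
    obtain ⟨y, hy, hlt⟩ := fdist_exists hSne hθ hxdist
    have h1 : fdist S x' ≤ fnorm (x' - y) := fdist_le_of_mem hy x'
    have h2 : fnorm (x' - y) ≤ fnorm (x' - x) + fnorm (x - y) := by
      have h3 := fnorm_add_le (x' - x) (x - y)
      rwa [sub_add_sub_cancel] at h3
    rw [fnorm_sub_rev x' x] at h2
    linarith only [h1, h2, hlt, hxx'd]
  have hPL' := hPL x' hx'1 hd2
  set G := fnorm (rgrad Df x) with hG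
  set G' := fnorm (rgrad Df x') with hG'
  set hd := fnorm (x - x') with hhd
  set W := fnorm (x * (xᵀ * x - 1)) with hW
  set Nn := fnorm (xᵀ * x - 1) with hNn
  set C := (3 + 2 * ε) * Lhat with hC
  have hC0 : 0 ≤ C := mul_nonneg (by linarith) hLhat0
  have hG0 : (0:ℝ) ≤ G := fnorm_nonneg _
  have hG'0 : (0:ℝ) ≤ G' := fnorm_nonneg _
  set Mx := max (1 / μ)
    ((2 * (3 + 2 * ε) ^ 2 * Lhat ^ 2 + μ * L') / (2 * μ * lam ^ 2 * (1 - ε) ^ 2)) with hMx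
  have hM1 : 1 / μ ≤ Mx := le_max_left _ _
  have hM2 : (2 * (3 + 2 * ε) ^ 2 * Lhat ^ 2 + μ * L') / (2 * μ * lam ^ 2 * (1 - ε) ^ 2)
      ≤ Mx := le_max_right _ _
  have hM0 : 0 < Mx := lt_of_lt_of_le (by positivity) hM1
  have k1 : merit f Df γ x - fstar ≤ (2 * μ)⁻¹ * G' ^ 2 + L' / 2 * hd ^ 2 := by
    have h1 : f x' - fstar ≤ (2 * μ)⁻¹ * G' ^ 2 := le_trans (le_abs_self _) hPL'
    linarith only [h1, hdesc]
  have k2 : G' ^ 2 ≤ 2 * G ^ 2 + 2 * C ^ 2 * hd ^ 2 := by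
    have h1 : G' ^ 2 ≤ (G + C * hd) ^ 2 := by
      have h2 : G + C * hd ≤ G + C * hd := le_rfl
      nlinarith only [hG'le, hG'0, hG0, mul_nonneg hC0 hh0]
    nlinarith only [h1, sq_nonneg (G - C * hd)]
  have k3 : (2 * μ)⁻¹ * G' ^ 2 ≤ (1 / μ) * G ^ 2 + (C ^ 2 / μ) * hd ^ 2 := by
    have h2μ : (0:ℝ) < (2 * μ)⁻¹ := by positivity
    calc (2 * μ)⁻¹ * G' ^ 2 ≤ (2 * μ)⁻¹ * (2 * G ^ 2 + 2 * C ^ 2 * hd ^ 2) :=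
          mul_le_mul_of_nonneg_left k2 h2μ.le
      _ = (1 / μ) * G ^ 2 + (C ^ 2 / μ) * hd ^ 2 := by
          field_simp
  have k4 : (C ^ 2 / μ) * hd ^ 2 + L' / 2 * hd ^ 2 ≤ Mx * (lam ^ 2 * W ^ 2) := by
    have hμne : μ ≠ 0 := ne_of_gt hμ
    have hlamne : lam ≠ 0 := ne_of_gt hlam
    have hεne : (1:ℝ) - ε ≠ 0 := by intro h; linarith only [h, hε1]
    have hβ : C ^ 2 / μ + L' / 2 =
        ((2 * (3 + 2 * ε) ^ 2 * Lhat ^ 2 + μ * L') / (2 * μ * lam ^ 2 * (1 - ε) ^ 2))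
          * (lam ^ 2 * (1 - ε) ^ 2) := by
      rw [hC]
      field_simp
    have hw1 : hd ^ 2 ≤ Nn ^ 2 := by nlinarith only [hhN, hh0]
    have hw2 : lam ^ 2 * (1 - ε) ^ 2 * hd ^ 2 ≤ lam ^ 2 * W ^ 2 := by
      have h1 : (1 - ε) ^ 2 * hd ^ 2 ≤ (1 - ε) * hd ^ 2 := by
        nlinarith only [mul_nonneg (mul_nonneg hε0.le
          (by linarith only [hε1] : (0:ℝ) ≤ 1 - ε)) (sq_nonneg hd)]
      have h2 : (1 - ε) * hd ^ 2 ≤ (1 - ε) * Nn ^ 2 :=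
        mul_le_mul_of_nonneg_left hw1 (by linarith only [hε1])
      have h3 : (1 - ε) ^ 2 * hd ^ 2 ≤ W ^ 2 := by linarith only [h1, h2, hWlow]
      have h4 := mul_le_mul_of_nonneg_left h3 (sq_nonneg lam)
      calc lam ^ 2 * (1 - ε) ^ 2 * hd ^ 2 = lam ^ 2 * ((1 - ε) ^ 2 * hd ^ 2) := by ring
        _ ≤ lam ^ 2 * W ^ 2 := h4
    calc (C ^ 2 / μ) * hd ^ 2 + L' / 2 * hd ^ 2 = (C ^ 2 / μ + L' / 2) * hd ^ 2 := by ring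
      _ = ((2 * (3 + 2 * ε) ^ 2 * Lhat ^ 2 + μ * L') / (2 * μ * lam ^ 2 * (1 - ε) ^ 2))
          * (lam ^ 2 * (1 - ε) ^ 2 * hd ^ 2) := by rw [hβ]; ring
      _ ≤ Mx * (lam ^ 2 * (1 - ε) ^ 2 * hd ^ 2) := by
          refine mul_le_mul_of_nonneg_right hM2 ?_
          positivity
      _ ≤ Mx * (lam ^ 2 * W ^ 2) := mul_le_mul_of_nonneg_left hw2 hM0.le
  have k5 : (1 / μ) * G ^ 2 ≤ Mx * G ^ 2 := mul_le_mul_of_nonneg_right hM1 (sq_nonneg G)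
  rw [hT]
  calc merit f Df γ x - fstar ≤ (2 * μ)⁻¹ * G' ^ 2 + L' / 2 * hd ^ 2 := k1
    _ ≤ (1 / μ) * G ^ 2 + (C ^ 2 / μ) * hd ^ 2 + L' / 2 * hd ^ 2 := by linarith only [k3]
    _ ≤ Mx * G ^ 2 + Mx * (lam ^ 2 * W ^ 2) := by linarith only [k4, k5]
    _ = Mx * (G ^ 2 + lam ^ 2 * W ^ 2) := by ring

end DRFGT
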